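/- Let k be a field and n ≥ 1. Let y ∈ k[[x]] with ord_x(y) = n, and let l be any intermediate field k((y)) ⊆ l ⊆ k((x)) with the property that every g ∈ l ∩ k[[x]] with 0 < ord_x(g) satisfies ord_x(g) ≥ n. Then l = k((y)). More precisely: every element of l ∩ k[[x]] can be written uniquely as a_0 + a_1 x + ... + a_{n-1} x^{n-1} with a_i ∈ k[[y]], and unless a_1 = ... = a_{n-1} = 0 one can produce an element g of l with 0 < ord_x(g) < n. -/

import Mathlib

/-- The canonical embedding `k[[x]] → k((x))` of power series into the field of
formal Laurent series. -/
noncomputable def psToLaurent (k : Type*) [Field k] :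
    PowerSeries k →+* LaurentSeries k :=
  HahnSeries.ofPowerSeries ℤ k

namespace IFL

variable {k : Type*} [Field k]

open PowerSeries Finset

lemma coeff_psL (f : PowerSeries k) (j : ℕ) :
    (psToLaurent k f).coeff (j : ℤ) = PowerSeries.coeff j f :=
  HahnSeries.ofPowerSeries_apply_coeff f j

lemma coeff_psL_neg (f : PowerSeries k) {j : ℤ} (hj : j < 0) :
    (psToLaurent k f).coeff j = 0 := by
  rw [psToLaurent, HahnSeries.ofPowerSeries_apply, HahnSeries.embDomain_notin_range]
  rintro ⟨m, hm⟩
  have hm' : (m : ℤ) = j := hm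
  omega

lemma psL_inj : Function.Injective (psToLaurent k) :=
  HahnSeries.ofPowerSeries_injective

lemma order_eq_of {x : LaurentSeries k} {d : ℤ} (h1 : x.coeff d ≠ 0)
    (h2 : ∀ j, j < d → x.coeff j = 0) : x.order = d := by
  have hx : x ≠ 0 := HahnSeries.ne_zero_of_coeff_ne_zero h1
  refine le_antisymm (HahnSeries.order_le_of_coeff_ne_zero h1) ?_
  by_contra h
  push_neg at h
  exact (HahnSeries.coeff_order_eq_zero.not.mpr hx) (h2 _ h)

lemma mem_range_psL {x : LaurentSeries k} (h : ∀ j : ℤ, j < 0 → x.coeff j = 0) :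
    x ∈ (psToLaurent k).range := by
  refine ⟨PowerSeries.mk fun m => x.coeff (m : ℤ), ?_⟩
  ext j
  rcases lt_or_ge j 0 with hj | hj
  · rw [coeff_psL_neg _ hj, h j hj]
  · obtain ⟨m, rfl⟩ := Int.eq_ofNat_of_zero_le hj
    rw [coeff_psL, PowerSeries.coeff_mk]

lemma coeff_L_sum {α : Type*} (s : Finset α) (f : α → LaurentSeries k) (j : ℤ) :
    (∑ i ∈ s, f i).coeff j = ∑ i ∈ s, (f i).coeff j :=
  map_sum (HahnSeries.coeff.addMonoidHom j) f s

lemma exists_min_coeff {f : PowerSeries k} (hf : f ≠ 0) :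
    ∃ m, coeff m f ≠ 0 ∧ ∀ j, j < m → coeff j f = 0 := by
  classical
  have hex : ∃ m, coeff m f ≠ 0 := by
    by_contra h
    push_neg at h
    exact hf (PowerSeries.ext fun m => by simpa using h m)
  refine ⟨Nat.find hex, Nat.find_spec hex, fun j hj => ?_⟩
  have := Nat.find_min hex hj
  simpa using this

lemma trunc_as_sum (f : PowerSeries k) (m : ℕ) :
    ((PowerSeries.trunc m f : Polynomial k) : PowerSeries k)
      = ∑ t ∈ range m, PowerSeries.C (R := k) (coeff t f) * X ^ t := by
  ext j
  rw [Polynomial.coeff_coe, coeff_trunc, map_sum]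
  simp only [coeff_C_mul, coeff_X_pow, mul_ite, mul_one, mul_zero]
  rw [Finset.sum_ite_eq (range m) j (fun t => coeff t f)]
  simp [Finset.mem_range]

variable {n : ℕ} {y : PowerSeries k} {ψ : LaurentSeries k →+* LaurentSeries k}

lemma exists_v (hy : y.order = n) :
    ∃ v : PowerSeries k, y = X ^ n * v ∧ constantCoeff v ≠ 0 := by
  rw [PowerSeries.order_eq_nat] at hy
  obtain ⟨v, hv⟩ := (PowerSeries.X_pow_dvd_iff).2 hy.2
  refine ⟨v, hv, fun h0 => hy.1 ?_⟩
  rw [hv, coeff_X_pow_mul', if_pos le_rfl, Nat.sub_self]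
  simpa using h0

lemma coeff_y_pow_lt (hy : y.order = n) (m : ℕ) {j : ℕ} (hj : j < n * m) :
    coeff j (y ^ m) = 0 := by
  obtain ⟨v, hv, -⟩ := exists_v hy
  rw [hv, mul_pow, ← pow_mul, coeff_X_pow_mul', if_neg (by omega)]

lemma coeff_y_pow_self (hy : y.order = n) (m : ℕ) :
    coeff (n * m) (y ^ m) ≠ 0 := by
  obtain ⟨v, hv, hc⟩ := exists_v hy
  rw [hv, mul_pow, ← pow_mul, coeff_X_pow_mul', if_pos le_rfl, Nat.sub_self]
  simpa using pow_ne_zero m hc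

lemma order_Xl_pow (i : ℕ) : ((psToLaurent k PowerSeries.X) ^ i).order = (i : ℤ) ∧
    (psToLaurent k PowerSeries.X) ^ i ≠ 0 := by
  have h1 : psToLaurent k (PowerSeries.X) ^ i = HahnSeries.single (i : ℤ) 1 := by
    rw [← map_pow]
    exact HahnSeries.ofPowerSeries_X_pow i
  rw [h1]
  exact ⟨HahnSeries.order_single one_ne_zero, HahnSeries.single_ne_zero one_ne_zero⟩

section

variable (hn : 1 ≤ n) (hy : y.order = n)
  (hψX : ψ (psToLaurent k PowerSeries.X) = psToLaurent k y)
  (hψC : ∀ a : k, ψ (psToLaurent k (PowerSeries.C (R := k) a)) = psToLaurent k (PowerSeries.C (R := k) a))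
  (hψcont : ∀ (f : PowerSeries k) (m : ℕ), ∃ g : PowerSeries k,
      ψ (psToLaurent k f) -
          ψ (psToLaurent k ((PowerSeries.trunc m f : Polynomial k) : PowerSeries k)) =
        psToLaurent k PowerSeries.X ^ (n * m) * psToLaurent k g)

include hψX hψC in
lemma psi_trunc (f : PowerSeries k) (m : ℕ) :
    ψ (psToLaurent k ((PowerSeries.trunc m f : Polynomial k) : PowerSeries k))
      = psToLaurent k (∑ t ∈ range m, PowerSeries.C (R := k) (coeff t f) * y ^ t) := by
  rw [trunc_as_sum, map_sum, map_sum, map_sum]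
  refine Finset.sum_congr rfl fun t _ => ?_
  rw [map_mul, map_mul, map_pow, map_pow, hψC, hψX, map_mul, map_pow]

include hψX hψC hψcont in
lemma psi_approx (f : PowerSeries k) (m : ℕ) :
    ∃ g : PowerSeries k, ψ (psToLaurent k f)
      = psToLaurent k (∑ t ∈ range m, PowerSeries.C (R := k) (coeff t f) * y ^ t
          + X ^ (n * m) * g) := by
  obtain ⟨g, hg⟩ := hψcont f m
  refine ⟨g, ?_⟩
  rw [map_add, map_mul, map_pow, ← psi_trunc hψX hψC f m]
  linear_combination (norm := ring_nf) hg

include hn hy hψX hψC hψcont in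
lemma psi_order {f : PowerSeries k} {m : ℕ} (h1 : coeff m f ≠ 0)
    (h2 : ∀ j, j < m → coeff j f = 0) :
    ψ (psToLaurent k f) ≠ 0 ∧ (ψ (psToLaurent k f)).order = ((n * m : ℕ) : ℤ) := by
  obtain ⟨g, hg⟩ := psi_approx hψX hψC hψcont f (m + 1)
  set F : PowerSeries k := ∑ t ∈ range (m+1), PowerSeries.C (R := k) (coeff t f) * y ^ t
      + X ^ (n * (m+1)) * g with hF
  have key : ∀ j : ℕ, j < n * (m + 1) → coeff j F = coeff m f * coeff j (y ^ m) := by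
    intro j hj
    rw [hF, map_add, coeff_X_pow_mul', if_neg (by omega), add_zero, map_sum]
    rw [Finset.sum_eq_single_of_mem m (self_mem_range_succ m)]
    · rw [coeff_C_mul]
    · intro t ht htm
      have : t < m := by simp only [mem_range] at ht; omega
      rw [coeff_C_mul, h2 t this, zero_mul]
  have hne : (ψ (psToLaurent k f)).coeff ((n * m : ℕ) : ℤ) ≠ 0 := by
    rw [hg, coeff_psL, key (n * m) (by nlinarith)]
    exact mul_ne_zero h1 (coeff_y_pow_self hy m)
  refine ⟨HahnSeries.ne_zero_of_coeff_ne_zero hne, order_eq_of hne ?_⟩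
  intro j hj
  rw [hg]
  rcases lt_or_ge j 0 with hj0 | hj0
  · exact coeff_psL_neg _ hj0
  · obtain ⟨j', rfl⟩ := Int.eq_ofNat_of_zero_le hj0
    have hj' : j' < n * m := by exact_mod_cast hj
    rw [coeff_psL, key j' (lt_of_lt_of_le hj' (Nat.mul_le_mul_left n (Nat.le_succ m))),
      coeff_y_pow_lt hy m hj', mul_zero]

include hn hy hψX hψC hψcont in
lemma lemmaA (b : Fin n → PowerSeries k) (hb : ∃ i, b i ≠ 0) :
    ∃ (i₀ : Fin n) (m : ℕ), b i₀ ≠ 0 ∧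
      (∑ i : Fin n, ψ (psToLaurent k (b i)) * psToLaurent k PowerSeries.X ^ (i : ℕ)) ≠ 0 ∧
      (∑ i : Fin n, ψ (psToLaurent k (b i)) * psToLaurent k PowerSeries.X ^ (i : ℕ)).order
        = ((n * m + (i₀ : ℕ) : ℕ) : ℤ) := by
  classical
  set term : Fin n → LaurentSeries k :=
    fun i => ψ (psToLaurent k (b i)) * psToLaurent k PowerSeries.X ^ (i : ℕ) with hterm
  have hM : ∀ i : Fin n, ∃ m : ℕ, b i ≠ 0 →
      coeff m (b i) ≠ 0 ∧ ∀ j, j < m → coeff j (b i) = 0 := by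
    intro i
    by_cases hbi : b i = 0
    · exact ⟨0, fun h => absurd hbi h⟩
    · obtain ⟨m, hm⟩ := exists_min_coeff hbi
      exact ⟨m, fun _ => hm⟩
  choose M hMspec using hM
  set d : Fin n → ℕ := fun i => n * M i + i with hd
  have hterm_spec : ∀ i : Fin n, b i ≠ 0 → term i ≠ 0 ∧ (term i).order = (d i : ℤ) := by
    intro i hbi
    obtain ⟨h1, h2⟩ := hMspec i hbi
    obtain ⟨hpsne, hpsord⟩ := psi_order hn hy hψX hψC hψcont h1 h2
    obtain ⟨hXord, hXne⟩ := order_Xl_pow (k := k) (i : ℕ)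
    refine ⟨mul_ne_zero hpsne hXne, ?_⟩
    rw [hterm, HahnSeries.order_mul hpsne hXne, hpsord, hXord, hd]
    push_cast
    ring
  have hterm_zero : ∀ i : Fin n, b i = 0 → term i = 0 := by
    intro i hbi
    simp [hterm, hbi]
  set T : Finset (Fin n) := Finset.univ.filter (fun i => b i ≠ 0) with hT
  have hTne : T.Nonempty := by
    obtain ⟨i, hi⟩ := hb
    exact ⟨i, by simp [hT, hi]⟩
  obtain ⟨i₀, hi₀T, hi₀min⟩ := T.exists_min_image d hTne
  have hbi₀ : b i₀ ≠ 0 := by simpa [hT] using hi₀T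
  have hdist : ∀ i ∈ T, i ≠ i₀ → ((d i₀ : ℕ) : ℤ) < ((d i : ℕ) : ℤ) := by
    intro i hiT hne
    have hle := hi₀min i hiT
    have : d i₀ ≠ d i := by
      intro heq
      apply hne
      have h1 : (n * M i + (i : ℕ)) % n = (i : ℕ) % n := Nat.mul_add_mod _ _ _
      have h2 : (n * M i₀ + (i₀ : ℕ)) % n = (i₀ : ℕ) % n := Nat.mul_add_mod _ _ _
      have h3 : (i : ℕ) % n = (i : ℕ) := Nat.mod_eq_of_lt i.isLt
      have h4 : (i₀ : ℕ) % n = (i₀ : ℕ) := Nat.mod_eq_of_lt i₀.isLt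
      have heq' : (n * M i₀ + (i₀ : ℕ)) = (n * M i + (i : ℕ)) := heq
      exact Fin.ext (by rw [heq'] at h2; omega)
    exact_mod_cast lt_of_le_of_ne hle this
  have hcoeff : ∀ (j : ℤ) (i : Fin n), j < (d i : ℤ) → (term i).coeff j = 0 := by
    intro j i hj
    rcases eq_or_ne (b i) 0 with hbi | hbi
    · simp [hterm_zero i hbi]
    · exact HahnSeries.coeff_eq_zero_of_lt_order (((hterm_spec i hbi).2) ▸ hj)
  have hSne : (∑ i : Fin n, term i).coeff ((d i₀ : ℕ) : ℤ) ≠ 0 := by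
    rw [coeff_L_sum]
    rw [Finset.sum_eq_single_of_mem i₀ (mem_univ i₀)]
    · obtain ⟨hne, hord⟩ := hterm_spec i₀ hbi₀
      rw [← hord]
      exact HahnSeries.coeff_order_eq_zero.not.mpr hne
    · intro i _ hne
      rcases eq_or_ne (b i) 0 with hbi | hbi
      · simp [hterm_zero i hbi]
      · exact hcoeff _ i (hdist i (by simp [hT, hbi]) hne)
  have hbelow : ∀ j : ℤ, j < ((d i₀ : ℕ) : ℤ) → (∑ i : Fin n, term i).coeff j = 0 := by
    intro j hj
    rw [coeff_L_sum]
    refine Finset.sum_eq_zero fun i _ => ?_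
    rcases eq_or_ne (b i) 0 with hbi | hbi
    · simp [hterm_zero i hbi]
    · refine hcoeff j i ?_
      rcases eq_or_ne i i₀ with rfl | hne
      · exact hj
      · exact hj.trans (hdist i (by simp [hT, hbi]) hne)
  exact ⟨i₀, M i₀, hbi₀, HahnSeries.ne_zero_of_coeff_ne_zero hSne, order_eq_of hSne hbelow⟩

include hy in
lemma div_step (R : PowerSeries k) :
    ∃ R', R = (∑ i ∈ range n, PowerSeries.C (R := k) (coeff i R) * X ^ i) + y * R' := by
  obtain ⟨v, hv, hc⟩ := exists_v hy
  have hdvd : (X : PowerSeries k) ^ n ∣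
      R - ∑ i ∈ range n, PowerSeries.C (R := k) (coeff i R) * X ^ i := by
    rw [X_pow_dvd_iff]
    intro j hj
    rw [map_sub, map_sum]
    simp only [coeff_C_mul, coeff_X_pow, mul_ite, mul_one, mul_zero]
    rw [Finset.sum_ite_eq (range n) j (fun t => coeff t R), if_pos (mem_range.2 hj), sub_self]
  obtain ⟨Q, hQ⟩ := hdvd
  refine ⟨v⁻¹ * Q, ?_⟩
  have hvv : v * v⁻¹ = 1 := PowerSeries.mul_inv_cancel v hc
  have : y * (v⁻¹ * Q) = X ^ n * Q := by
    rw [hv]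
    calc X ^ n * v * (v⁻¹ * Q) = X ^ n * Q * (v * v⁻¹) := by ring
    _ = X ^ n * Q := by rw [hvv, mul_one]
  rw [this, ← hQ]
  ring

include hn hy hψX hψC hψcont in
lemma existence (f : PowerSeries k) :
    ∃ b : Fin n → PowerSeries k,
      psToLaurent k f
        = ∑ i : Fin n, ψ (psToLaurent k (b i)) * psToLaurent k PowerSeries.X ^ (i : ℕ) := by
  classical
  obtain ⟨v, hv, hc⟩ := exists_v hy
  let Rseq : ℕ → PowerSeries k := fun m =>
    Nat.rec f (fun _ R => Classical.choose (div_step hy R)) m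
  have hstep : ∀ m, Rseq m
      = (∑ i ∈ range n, PowerSeries.C (R := k) (coeff i (Rseq m)) * X ^ i) + y * Rseq (m + 1) :=
    fun m => Classical.choose_spec (div_step hy (Rseq m))
  have hinv : ∀ M, f = (∑ m ∈ range M,
      y ^ m * ∑ i ∈ range n, PowerSeries.C (R := k) (coeff i (Rseq m)) * X ^ i) + y ^ M * Rseq M := by
    intro M
    induction M with
    | zero => simp [Rseq]
    | succ M ih =>
      rw [Finset.sum_range_succ]
      calc f = (∑ m ∈ range M,
            y ^ m * ∑ i ∈ range n, PowerSeries.C (R := k) (coeff i (Rseq m)) * X ^ i)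
            + y ^ M * Rseq M := ih
        _ = _ := by
          have h3 : y ^ M * Rseq M
              = y ^ M * (∑ i ∈ range n, PowerSeries.C (R := k) (coeff i (Rseq M)) * X ^ i)
                + y ^ (M + 1) * Rseq (M + 1) := by
            conv_lhs => rw [hstep M]
            ring
          rw [h3]
          ring
  set b' : ℕ → PowerSeries k := fun i => PowerSeries.mk fun m => coeff i (Rseq m) with hb'
  refine ⟨fun i : Fin n => b' (i : ℕ), ?_⟩
  rw [Fin.sum_univ_eq_sum_range
    (fun i => ψ (psToLaurent k (b' i)) * psToLaurent k PowerSeries.X ^ i) n]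
  ext j
  set M : ℕ := j.toNat + 1 with hM
  obtain ⟨g, hg⟩ : ∃ g : ℕ → PowerSeries k, ∀ i : ℕ, ψ (psToLaurent k (b' i))
      = psToLaurent k (∑ t ∈ range M, PowerSeries.C (R := k) (coeff t (b' i)) * y ^ t
          + X ^ (n * M) * g i) := by
    have h := fun i : ℕ => psi_approx hψX hψC hψcont (b' i) M
    choose g hg using h
    exact ⟨g, hg⟩
  set A : PowerSeries k := ∑ i ∈ range n,
      (∑ t ∈ range M, PowerSeries.C (R := k) (coeff t (b' i)) * y ^ t + X ^ (n * M) * g i) * X ^ i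
      with hA
  have hS : (∑ i ∈ range n, ψ (psToLaurent k (b' i)) * psToLaurent k PowerSeries.X ^ i)
      = psToLaurent k A := by
    rw [hA, map_sum]
    refine Finset.sum_congr rfl fun i _ => ?_
    rw [hg i, map_mul, map_pow]
  rw [hS]
  have hfa : f - A = X ^ (n * M) * (v ^ M * Rseq M - ∑ i ∈ range n, g i * X ^ i) := by
    have h1 : A = (∑ m ∈ range M,
        y ^ m * ∑ i ∈ range n, PowerSeries.C (R := k) (coeff i (Rseq m)) * X ^ i)
        + X ^ (n * M) * ∑ i ∈ range n, g i * X ^ i := by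
      rw [hA]
      simp only [add_mul, Finset.sum_add_distrib, Finset.sum_mul, Finset.mul_sum]
      congr 1
      · rw [Finset.sum_comm]
        refine Finset.sum_congr rfl fun m _ => Finset.sum_congr rfl fun i _ => ?_
        rw [hb', PowerSeries.coeff_mk]
        ring
      · refine Finset.sum_congr rfl fun i _ => ?_
        ring
    rw [h1]
    have h2 : y ^ M = X ^ (n * M) * v ^ M := by rw [hv, mul_pow, pow_mul]
    calc f - ((∑ m ∈ range M,
        y ^ m * ∑ i ∈ range n, PowerSeries.C (R := k) (coeff i (Rseq m)) * X ^ i)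
        + X ^ (n * M) * ∑ i ∈ range n, g i * X ^ i)
        = y ^ M * Rseq M - X ^ (n * M) * ∑ i ∈ range n, g i * X ^ i := by
          rw [hinv M]; ring
      _ = _ := by rw [h2]; ring
  have key : (psToLaurent k f - psToLaurent k A).coeff j = 0 := by
    rw [← map_sub, hfa]
    rcases lt_or_ge j 0 with hj0 | hj0
    · exact coeff_psL_neg _ hj0
    · obtain ⟨j', rfl⟩ := Int.eq_ofNat_of_zero_le hj0
      have hle : M ≤ n * M := Nat.le_mul_of_pos_left M hn
      have hj' : j' < M := by omega
      rw [coeff_psL, coeff_X_pow_mul', if_neg (Nat.not_le.mpr (lt_of_lt_of_le hj' hle))]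
  rw [HahnSeries.coeff_sub] at key
  exact sub_eq_zero.mp key

end

end IFL

theorem intermediate_field_of_laurent (k : Type*) [Field k] (n : ℕ) (hn : 1 ≤ n)
    (y : PowerSeries k) (hy : y.order = n)
    (ψ : LaurentSeries k →+* LaurentSeries k)
    (hψX : ψ (psToLaurent k PowerSeries.X) = psToLaurent k y)
    (hψC : ∀ a : k, ψ (psToLaurent k (PowerSeries.C (R := k) a)) = psToLaurent k (PowerSeries.C (R := k) a))
    (hψcont : ∀ (f : PowerSeries k) (m : ℕ), ∃ g : PowerSeries k,
      ψ (psToLaurent k f) -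
          ψ (psToLaurent k ((PowerSeries.trunc m f : Polynomial k) : PowerSeries k)) =
        psToLaurent k PowerSeries.X ^ (n * m) * psToLaurent k g)
    (l : Subfield (LaurentSeries k))
    (hEl : ψ.fieldRange ≤ l)
    (hord : ∀ g : LaurentSeries k, g ∈ l → g ∈ (psToLaurent k).range →
      g ≠ 0 → 0 < g.order → (n : ℤ) ≤ g.order) :
    l = ψ.fieldRange ∧
    (∀ g : LaurentSeries k, g ∈ l → g ∈ (psToLaurent k).range →
      ∃! a : Fin n → LaurentSeries k,
        (∀ i : Fin n, a i ∈ (ψ.comp (psToLaurent k)).range) ∧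
        g = ∑ i : Fin n, a i * psToLaurent k PowerSeries.X ^ (i : ℕ)) ∧
    (∀ a : Fin n → LaurentSeries k,
      (∀ i : Fin n, a i ∈ (ψ.comp (psToLaurent k)).range) →
      (∑ i : Fin n, a i * psToLaurent k PowerSeries.X ^ (i : ℕ)) ∈ l →
      (∃ i : Fin n, 0 < (i : ℕ) ∧ a i ≠ 0) →
      ∃ g' : LaurentSeries k, g' ∈ l ∧ g' ∈ (psToLaurent k).range ∧
        0 < g'.order ∧ g'.order < (n : ℤ)) := by
  classical
  have hψinj : Function.Injective ψ := ψ.injective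
  have hpsinj : Function.Injective (psToLaurent k) := IFL.psL_inj
  have hYl_memRange : psToLaurent k y ∈ ψ.fieldRange := ⟨psToLaurent k PowerSeries.X, hψX⟩
  have hYl_mem : psToLaurent k y ∈ l := hEl hYl_memRange
  have hyfacts := PowerSeries.order_eq_nat.mp hy
  have hy0 : y ≠ 0 := fun h => hyfacts.1 (by simp [h])
  have hYl_ne : psToLaurent k y ≠ 0 := fun h => hy0 (hpsinj (by rw [h, map_zero]))
  have hYl_ord : (psToLaurent k y).order = (n : ℤ) := by
    apply IFL.order_eq_of
    · rw [IFL.coeff_psL]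
      exact hyfacts.1
    · intro j hj
      rcases lt_or_ge j 0 with h0 | h0
      · exact IFL.coeff_psL_neg _ h0
      · obtain ⟨j', rfl⟩ := Int.eq_ofNat_of_zero_le h0
        rw [IFL.coeff_psL]
        exact hyfacts.2 j' (by exact_mod_cast hj)
  -- Part 3
  have P3 : ∀ a : Fin n → LaurentSeries k,
      (∀ i : Fin n, a i ∈ (ψ.comp (psToLaurent k)).range) →
      (∑ i : Fin n, a i * psToLaurent k PowerSeries.X ^ (i : ℕ)) ∈ l →
      (∃ i : Fin n, 0 < (i : ℕ) ∧ a i ≠ 0) →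
      ∃ g' : LaurentSeries k, g' ∈ l ∧ g' ∈ (psToLaurent k).range ∧
        0 < g'.order ∧ g'.order < (n : ℤ) := by
    rintro a harange hsum_mem ⟨i₁, hi₁pos, hi₁ne⟩
    choose c hc using harange
    set i0 : Fin n := ⟨0, hn⟩ with hi0
    set b : Fin n → PowerSeries k := fun i => if i = i0 then 0 else c i with hb
    have hbi₁ : b i₁ ≠ 0 := by
      have hne : i₁ ≠ i0 := by
        intro h
        rw [h] at hi₁pos
        simp [hi0] at hi₁pos
      rw [hb]
      simp only [if_neg hne]
      intro h
      apply hi₁ne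
      rw [← hc i₁, RingHom.comp_apply, h, map_zero, map_zero]
    obtain ⟨i₂, m, hbi₂, hSne, hSord⟩ :=
      IFL.lemmaA hn hy hψX hψC hψcont b ⟨i₁, hbi₁⟩
    have hterm_eq : ∀ i : Fin n,
        ψ (psToLaurent k (b i)) * psToLaurent k PowerSeries.X ^ (i : ℕ)
          = (if i = i0 then 0 else a i * psToLaurent k PowerSeries.X ^ (i : ℕ)) := by
      intro i
      by_cases hi : i = i0
      · simp [hb, hi]
      · rw [hb]
        simp only [if_neg hi]
        rw [← hc i, RingHom.comp_apply]
    have hh_eq : (∑ i : Fin n, ψ (psToLaurent k (b i)) * psToLaurent k PowerSeries.X ^ (i : ℕ))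
        = (∑ i : Fin n, a i * psToLaurent k PowerSeries.X ^ (i : ℕ)) - a i0 := by
      have hsplit : ∀ i : Fin n,
          (if i = i0 then 0 else a i * psToLaurent k PowerSeries.X ^ (i : ℕ))
            = a i * psToLaurent k PowerSeries.X ^ (i : ℕ)
              - (if i = i0 then a i * psToLaurent k PowerSeries.X ^ (i : ℕ) else 0) := by
        intro i
        by_cases hi : i = i0 <;> simp [hi]
      rw [Finset.sum_congr rfl (fun i _ => hterm_eq i),
        Finset.sum_congr rfl (fun i _ => hsplit i), Finset.sum_sub_distrib,
        Finset.sum_ite_eq' Finset.univ i0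
          (fun i => a i * psToLaurent k PowerSeries.X ^ (i : ℕ))]
      simp [hi0]
    have ha0mem : a i0 ∈ ψ.fieldRange := ⟨psToLaurent k (c i0), by rw [← hc i0]; rfl⟩
    have hhl : (∑ i : Fin n, ψ (psToLaurent k (b i)) * psToLaurent k PowerSeries.X ^ (i : ℕ)) ∈ l := by
      rw [hh_eq]
      exact sub_mem hsum_mem (hEl ha0mem)
    have hYlm_ne : psToLaurent k y ^ m ≠ 0 := pow_ne_zero _ hYl_ne
    refine ⟨(∑ i : Fin n, ψ (psToLaurent k (b i)) * psToLaurent k PowerSeries.X ^ (i : ℕ))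
      * (psToLaurent k y ^ m)⁻¹, ?_, ?_, ?_, ?_⟩
    case _ => exact mul_mem hhl (inv_mem (pow_mem hYl_mem m))
    all_goals {
      have hg'ne : (∑ i : Fin n, ψ (psToLaurent k (b i)) * psToLaurent k PowerSeries.X ^ (i : ℕ))
          * (psToLaurent k y ^ m)⁻¹ ≠ 0 := mul_ne_zero hSne (inv_ne_zero hYlm_ne)
      have hrec : (∑ i : Fin n, ψ (psToLaurent k (b i)) * psToLaurent k PowerSeries.X ^ (i : ℕ))
          = ((∑ i : Fin n, ψ (psToLaurent k (b i)) * psToLaurent k PowerSeries.X ^ (i : ℕ))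
            * (psToLaurent k y ^ m)⁻¹) * psToLaurent k y ^ m := by
        field_simp
      have hordm : (psToLaurent k y ^ m).order = (m : ℤ) * n := by
        rw [HahnSeries.order_pow, hYl_ord, nsmul_eq_mul]
      have hcomb := HahnSeries.order_mul hg'ne hYlm_ne
      rw [← hrec, hSord, hordm] at hcomb
      have hi₂pos : 0 < (i₂ : ℕ) := by
        rcases Nat.eq_zero_or_pos (i₂ : ℕ) with h | h
        swap
        · exact h
        · exfalso
          apply hbi₂
          have : i₂ = i0 := Fin.ext (by simp [hi0, h])
          rw [hb, this]
          simp
      have hg'ord : ((∑ i : Fin n, ψ (psToLaurent k (b i)) * psToLaurent k PowerSeries.X ^ (i : ℕ))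
          * (psToLaurent k y ^ m)⁻¹).order = ((i₂ : ℕ) : ℤ) := by
        push_cast at hcomb ⊢
        linarith
      first
      | exact IFL.mem_range_psL (fun j hj => HahnSeries.coeff_eq_zero_of_lt_order
          (by rw [hg'ord]; exact lt_of_lt_of_le hj (by exact_mod_cast Nat.zero_le _)))
      | (rw [hg'ord]; exact_mod_cast hi₂pos)
      | (rw [hg'ord]; exact_mod_cast i₂.isLt)
    }
  -- Part 2
  have P2 : ∀ g : LaurentSeries k, g ∈ l → g ∈ (psToLaurent k).range →
      ∃! a : Fin n → LaurentSeries k,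
        (∀ i : Fin n, a i ∈ (ψ.comp (psToLaurent k)).range) ∧
        g = ∑ i : Fin n, a i * psToLaurent k PowerSeries.X ^ (i : ℕ) := by
    rintro g hgl ⟨f, rfl⟩
    obtain ⟨b, hbsum⟩ := IFL.existence hn hy hψX hψC hψcont f
    refine ⟨fun i => ψ (psToLaurent k (b i)), ⟨fun i => ⟨b i, rfl⟩, hbsum⟩, ?_⟩
    rintro a' ⟨h1', h2'⟩
    choose c hc using h1'
    have hzero : ∀ i, c i - b i = 0 := by
      by_contra hcon
      push_neg at hcon
      obtain ⟨i₁, hi₁⟩ := hcon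
      obtain ⟨i₂, m, -, hSne, -⟩ :=
        IFL.lemmaA hn hy hψX hψC hψcont (fun i => c i - b i) ⟨i₁, hi₁⟩
      apply hSne
      have hstep : ∀ i : Fin n,
          ψ (psToLaurent k (c i - b i)) * psToLaurent k PowerSeries.X ^ (i : ℕ)
            = a' i * psToLaurent k PowerSeries.X ^ (i : ℕ)
              - ψ (psToLaurent k (b i)) * psToLaurent k PowerSeries.X ^ (i : ℕ) := by
        intro i
        rw [map_sub, map_sub, ← hc i, RingHom.comp_apply, sub_mul]
      rw [Finset.sum_congr rfl (fun i _ => hstep i), Finset.sum_sub_distrib,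
        ← h2', ← hbsum, sub_self]
    funext i
    have hcb : c i = b i := sub_eq_zero.mp (hzero i)
    rw [← hc i, RingHom.comp_apply, hcb]
  -- Part 1
  have P1 : l = ψ.fieldRange := by
    refine le_antisymm ?_ hEl
    intro u hu
    rcases eq_or_ne u 0 with rfl | hu0
    · exact zero_mem _
    have hYlM_ne : psToLaurent k y ^ u.order.natAbs ≠ 0 := pow_ne_zero _ hYl_ne
    have hvl : psToLaurent k y ^ u.order.natAbs * u ∈ l :=
      mul_mem (pow_mem hYl_mem _) hu
    have hvne : psToLaurent k y ^ u.order.natAbs * u ≠ 0 := mul_ne_zero hYlM_ne hu0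
    have hvord : (0 : ℤ) ≤ (psToLaurent k y ^ u.order.natAbs * u).order := by
      rw [HahnSeries.order_mul hYlM_ne hu0, HahnSeries.order_pow, hYl_ord, nsmul_eq_mul]
      have h1 : -u.order ≤ (u.order.natAbs : ℤ) := by
        rw [Nat.cast_natAbs]
        push_cast
        exact neg_le_abs u.order
      have h2 : (u.order.natAbs : ℤ) * 1 ≤ (u.order.natAbs : ℤ) * n := by
        apply mul_le_mul_of_nonneg_left _ (by positivity)
        exact_mod_cast hn
      linarith
    have hvrange : psToLaurent k y ^ u.order.natAbs * u ∈ (psToLaurent k).range :=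
      IFL.mem_range_psL (fun j hj =>
        HahnSeries.coeff_eq_zero_of_lt_order (lt_of_lt_of_le hj hvord))
    obtain ⟨f, hf⟩ := hvrange
    obtain ⟨bv, hbvsum⟩ := IFL.existence hn hy hψX hψC hψcont f
    have hno : ¬ ∃ i : Fin n, 0 < (i : ℕ) ∧ ψ (psToLaurent k (bv i)) ≠ 0 := by
      rintro ⟨i₁, hi₁pos, hi₁ne⟩
      obtain ⟨g', hg'l, hg'r, hg'pos, hg'lt⟩ :=
        P3 (fun i => ψ (psToLaurent k (bv i))) (fun i => ⟨bv i, rfl⟩)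
          (by rw [← hbvsum, hf]; exact hvl) ⟨i₁, hi₁pos, hi₁ne⟩
      have hg'ne : g' ≠ 0 := by
        intro h
        rw [h, HahnSeries.order_zero] at hg'pos
        exact lt_irrefl 0 hg'pos
      exact absurd (hord g' hg'l hg'r hg'ne hg'pos) (not_le.mpr hg'lt)
    push_neg at hno
    have hv_eq : psToLaurent k y ^ u.order.natAbs * u
        = ψ (psToLaurent k (bv ⟨0, hn⟩)) := by
      rw [← hf, hbvsum]
      rw [Finset.sum_eq_single_of_mem ⟨0, hn⟩ (Finset.mem_univ _)]
      · simp
      · intro i _ hne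
        have hipos : 0 < (i : ℕ) := by
          rcases Nat.eq_zero_or_pos (i : ℕ) with h | h
          swap
          · exact h
          · exact absurd (Fin.ext (by simp [h]) : i = ⟨0, hn⟩) hne
        rw [hno i hipos, zero_mul]
    have hvfr : psToLaurent k y ^ u.order.natAbs * u ∈ ψ.fieldRange :=
      ⟨psToLaurent k (bv ⟨0, hn⟩), hv_eq.symm⟩
    have hufrom : u = (psToLaurent k y ^ u.order.natAbs)⁻¹
        * (psToLaurent k y ^ u.order.natAbs * u) := by
      field_simp
    rw [hufrom]
    exact mul_mem (inv_mem (pow_mem hYl_memRange _)) hvfr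
  exact ⟨P1, P2, P3⟩
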